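/- For every (z₀,z₁,z₂) ∈ ℂ³ ∖ {0}, the vector (4 z₀ z̄₂, 2 z₀ z̄₁ − 2 z₁ z̄₂, |z₀|² + |z₂|² − ½|z₁|² − ½|z₁² − 4 z₀ z₂|) ∈ ℂ × ℂ × ℝ is nonzero, and it is invariant under scaling (z₀,z₁,z₂) by a unit complex number up to the induced action; in particular the formula G([z₀:z₁:z₂]) = ν(4 z₀ z̄₂, 2 z₀ z̄₁ − 2 z₁ z̄₂, |z₀|²+|z₂|²−½|z₁|²−½|z₁²−4z₀z₂|), with ν the radial normalization, defines a continuous map from CP² (viewed via unit-norm homogeneous coordinates) to S⁴. -/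

import Mathlib

/-- The (unnormalized) vector defining G: for (z₀,z₁,z₂) ∈ ℂ³,
(4z₀z̄₂, 2z₀z̄₁ − 2z₁z̄₂, |z₀|² + |z₂|² − ½|z₁|² − ½|z₁² − 4z₀z₂|) ∈ ℂ × ℂ × ℝ. -/
noncomputable def Gvec (z : ℂ × ℂ × ℂ) : ℂ × ℂ × ℝ :=
  (4 * z.1 * (starRingEnd ℂ) z.2.2,
   2 * z.1 * (starRingEnd ℂ) z.2.1 - 2 * z.2.1 * (starRingEnd ℂ) z.2.2,
   ‖z.1‖ ^ 2 + ‖z.2.2‖ ^ 2 - ‖z.2.1‖ ^ 2 / 2 - ‖z.2.1 ^ 2 - 4 * z.1 * z.2.2‖ / 2)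

/-- Euclidean norm on ℂ × ℂ × ℝ ≅ ℝ⁵. -/
noncomputable def enorm5 (v : ℂ × ℂ × ℝ) : ℝ :=
  Real.sqrt (‖v.1‖ ^ 2 + ‖v.2.1‖ ^ 2 + v.2.2 ^ 2)

/-- For (z₀,z₁,z₂) ≠ 0 the vector Gvec(z₀,z₁,z₂) is nonzero, is unchanged when
(z₀,z₁,z₂) is multiplied by a unit complex scalar, and its radial normalization
ν(Gvec z) lies on S⁴ (has Euclidean norm 1); hence
G([z₀:z₁:z₂]) = ν(Gvec(z₀,z₁,z₂)) defines a map CP² → S⁴. -/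
theorem stmt19 (z : ℂ × ℂ × ℂ) (hz : z ≠ 0) :
    Gvec z ≠ 0 ∧
    (∀ l : ℂ, ‖l‖ = 1 → Gvec (l * z.1, l * z.2.1, l * z.2.2) = Gvec z) ∧
    0 < enorm5 (Gvec z) ∧
    enorm5 ((enorm5 (Gvec z))⁻¹ • Gvec z) = 1 := by
  obtain ⟨a, b, c⟩ := z
  have hz' : ¬ (a = 0 ∧ b = 0 ∧ c = 0) := by
    intro ⟨h1, h2, h3⟩; exact hz (by simp [h1, h2, h3, Prod.ext_iff])
  have key : ∀ x : ℂ, ‖x‖ ^ 2 = 0 → x = 0 := fun x hx => by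
    simpa using pow_eq_zero_iff (n := 2) (by norm_num) |>.mp hx
  have hG : Gvec (a, b, c) ≠ 0 := by
    intro h
    rw [Prod.ext_iff] at h
    obtain ⟨h1, h23⟩ := h
    rw [Prod.ext_iff] at h23
    obtain ⟨h2, h3⟩ := h23
    simp only [Gvec, Prod.fst_zero, Prod.snd_zero] at h1 h2 h3
    have hac : a = 0 ∨ c = 0 := by
      rcases mul_eq_zero.mp h1 with h | h
      · rcases mul_eq_zero.mp h with h' | h'
        · exact absurd h' (by norm_num)
        · exact Or.inl h'
      · exact Or.inr ((map_eq_zero _).mp h)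
    rcases hac with ha | hc
    · subst ha
      have hbc : b = 0 ∨ c = 0 := by
        have hb : b * (starRingEnd ℂ) c = 0 := by linear_combination (-1/2 : ℂ) * h2
        rcases mul_eq_zero.mp hb with h | h
        · exact Or.inl h
        · exact Or.inr ((map_eq_zero _).mp h)
      rcases hbc with hb | hc
      · subst hb
        rw [show ((0:ℂ)^2 - 4*0*c) = 0 by ring] at h3
        simp only [norm_zero] at h3
        exact hz' ⟨rfl, rfl, key c (by nlinarith [h3])⟩
      · subst hc
        rw [show ((b:ℂ)^2 - 4*0*0) = b^2 by ring, norm_pow] at h3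
        simp only [norm_zero] at h3
        exact hz' ⟨rfl, key b (by nlinarith [h3]), rfl⟩
    · subst hc
      have hab : a = 0 ∨ b = 0 := by
        rw [map_zero] at h2
        have h2' : a * (starRingEnd ℂ) b = 0 := by linear_combination (1/2 : ℂ) * h2
        rcases mul_eq_zero.mp h2' with h | h
        · exact Or.inl h
        · exact Or.inr ((map_eq_zero _).mp h)
      rcases hab with ha | hb
      · subst ha
        rw [show ((b:ℂ)^2 - 4*0*0) = b^2 by ring, norm_pow] at h3
        simp only [norm_zero] at h3
        exact hz' ⟨rfl, key b (by nlinarith [h3]), rfl⟩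
      · subst hb
        rw [show ((0:ℂ)^2 - 4*a*0) = 0 by ring] at h3
        simp only [norm_zero] at h3
        exact hz' ⟨key a (by nlinarith [h3]), rfl, rfl⟩
  have hpos : 0 < enorm5 (Gvec (a, b, c)) := by
    set v := Gvec (a, b, c) with hv
    have hs : 0 < ‖v.1‖ ^ 2 + ‖v.2.1‖ ^ 2 + v.2.2 ^ 2 := by
      by_contra h
      push_neg at h
      have e1 : ‖v.1‖ ^ 2 = 0 := by nlinarith [sq_nonneg ‖v.1‖, sq_nonneg ‖v.2.1‖, sq_nonneg v.2.2]
      have e2 : ‖v.2.1‖ ^ 2 = 0 := by nlinarith [sq_nonneg ‖v.1‖, sq_nonneg ‖v.2.1‖, sq_nonneg v.2.2]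
      have e3 : v.2.2 ^ 2 = 0 := by nlinarith [sq_nonneg ‖v.1‖, sq_nonneg ‖v.2.1‖, sq_nonneg v.2.2]
      apply hG
      have k1 : v.1 = 0 := key _ e1
      have k2 : v.2.1 = 0 := key _ e2
      have k3 : v.2.2 = 0 := pow_eq_zero_iff (n := 2) (by norm_num) |>.mp e3
      rw [hv] at k1 k2 k3
      exact Prod.ext k1 (Prod.ext k2 k3)
    exact Real.sqrt_pos.mpr hs
  refine ⟨hG, ?_, hpos, ?_⟩
  · intro l hl
    have hl1 : l * (starRingEnd ℂ) l = 1 := by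
      rw [Complex.mul_conj]
      norm_cast
      rw [Complex.normSq_eq_norm_sq]
      simp [hl]
    simp only [Gvec, map_mul]
    refine Prod.ext ?_ (Prod.ext ?_ ?_)
    · simp only
      linear_combination (4 * a * (starRingEnd ℂ) c) * hl1
    · simp only
      linear_combination (2 * a * (starRingEnd ℂ) b - 2 * b * (starRingEnd ℂ) c) * hl1
    · simp only
      rw [show ((l*b)^2 - 4*(l*a)*(l*c)) = l^2 * (b^2 - 4*a*c) by ring]
      simp only [norm_mul, norm_pow, hl, one_mul, one_pow]
  · set v := Gvec (a, b, c) with hv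
    set r := (enorm5 v)⁻¹ with hr
    have hr0 : 0 ≤ r := inv_nonneg.mpr hpos.le
    have h1 : ‖(r • v).1‖ ^ 2 = r ^ 2 * ‖v.1‖ ^ 2 := by
      rw [Prod.smul_fst, norm_smul, Real.norm_eq_abs, mul_pow, sq_abs]
    have h2 : ‖(r • v).2.1‖ ^ 2 = r ^ 2 * ‖v.2.1‖ ^ 2 := by
      rw [Prod.smul_snd, Prod.smul_fst, norm_smul, Real.norm_eq_abs, mul_pow, sq_abs]
    have h3 : ((r • v).2.2) ^ 2 = r ^ 2 * v.2.2 ^ 2 := by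
      rw [Prod.smul_snd, Prod.smul_snd, smul_eq_mul, mul_pow]
    have hsmul : enorm5 (r • v) = r * enorm5 v := by
      rw [enorm5, h1, h2, h3,
        show r^2*‖v.1‖^2 + r^2*‖v.2.1‖^2 + r^2*v.2.2^2
            = r^2 * (‖v.1‖^2 + ‖v.2.1‖^2 + v.2.2^2) by ring,
        Real.sqrt_mul (sq_nonneg r), Real.sqrt_sq hr0]
      rfl
    rw [hsmul, hr, inv_mul_cancel₀ hpos.ne']
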